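/- arXiv:0709.0885 — 2 statements merged into one kernel-verified Lean document; each statement's English description precedes it below -/
import Mathlib

section
/- For all integers n and m with m odd, n even, and 1 ≤ m ≤ n − 1, one has S_{3,0}([2^n, 2^n + 2^m)) = 0. -/
/-- binary digit sum -/
def sigma2 (n : ℕ) : ℕ := (Nat.digits 2 n).sum

/-- `S m l x = Σ_{0 ≤ n < x, n ≡ l (mod m)} (−1)^{σ(n)}` -/
def S (m l x : ℕ) : ℤ :=
  ∑ n ∈ (Finset.range x).filter (fun n => n % m = l), (-1 : ℤ) ^ sigma2 n

/-- `Sint m l x y = S_{m,l}([x,y)) = S_{m,l}(y) − S_{m,l}(x)` -/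
def Sint (m l x y : ℕ) : ℤ := S m l y - S m l x

lemma sigma2_rec (n : ℕ) (hn : 0 < n) : sigma2 n = n % 2 + sigma2 (n / 2) := by
  unfold sigma2
  rw [Nat.digits_def' (by norm_num : 1 < 2) hn]
  simp [Nat.add_comm]

lemma sigma2_pow_add (p : ℕ) : ∀ k < 2 ^ p, sigma2 (2 ^ p + k) = 1 + sigma2 k := by
  induction p with
  | zero =>
    intro k hk
    interval_cases k
    simp [sigma2]
  | succ p ih =>
    intro k hk
    have h2 : 0 < 2 ^ (p + 1) + k := by positivity
    rw [sigma2_rec _ h2]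
    have hdiv : (2 ^ (p + 1) + k) / 2 = 2 ^ p + k / 2 := by
      rw [pow_succ]
      omega
    have hq : k / 2 < 2 ^ p := by
      rw [pow_succ] at hk; omega
    rw [hdiv, ih _ hq]
    rcases Nat.eq_zero_or_pos k with hk0 | hk0
    · subst hk0; simp [sigma2]
    · rw [sigma2_rec k hk0]
      have : (2 ^ (p + 1) + k) % 2 = k % 2 := by
        have : 2 ^ (p + 1) % 2 = 0 := by
          simp [pow_succ, Nat.mul_mod]
        omega
      omega

lemma S_split (p x l l' : ℕ) (hx : x ≤ 2 ^ p)
    (hc : ∀ i < x, ((2 ^ p + i) % 3 = l ↔ i % 3 = l')) :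
    S 3 l (2 ^ p + x) = S 3 l (2 ^ p) - S 3 l' x := by
  unfold S
  rw [Finset.sum_filter, Finset.sum_filter, Finset.sum_filter,
    Finset.sum_range_add]
  have : ∀ i ∈ Finset.range x,
      (if (2 ^ p + i) % 3 = l then (-1 : ℤ) ^ sigma2 (2 ^ p + i) else 0)
        = -(if i % 3 = l' then (-1 : ℤ) ^ sigma2 i else 0) := by
    intro i hi
    rw [Finset.mem_range] at hi
    have hil : i < 2 ^ p := lt_of_lt_of_le hi hx
    rw [sigma2_pow_add p i hil]
    by_cases h : i % 3 = l'
    · rw [if_pos h, if_pos ((hc i hi).mpr h), pow_add]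
      ring
    · rw [if_neg h, if_neg (fun hh => h ((hc i hi).mp hh))]
      ring
  rw [Finset.sum_congr rfl this, Finset.sum_neg_distrib]
  ring

lemma pow2_mod3 : ∀ k : ℕ, 2 ^ (2 * k) % 3 = 1 ∧ 2 ^ (2 * k + 1) % 3 = 2 := by
  intro k
  induction k with
  | zero => simp
  | succ k ih =>
    have h1 : 2 * (k + 1) = 2 * k + 1 + 1 := by ring
    constructor
    · rw [h1, pow_succ]
      have := ih.2
      omega
    · rw [h1, pow_succ, pow_succ]
      have := ih.2
      omega

lemma triple (k : ℕ) :
    S 3 0 (2 ^ (2 * k + 1)) = 3 ^ k ∧ S 3 1 (2 ^ (2 * k + 1)) = -3 ^ k ∧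
      S 3 2 (2 ^ (2 * k + 1)) = 0 := by
  induction k with
  | zero =>
    refine ⟨?_, ?_, ?_⟩ <;>
      norm_num [S, Finset.sum_filter, Finset.sum_range_succ, sigma2]
  | succ k ih =>
    obtain ⟨ha, hb, hc⟩ := ih
    set p := 2 * k + 1 with hp
    have hmod : 2 ^ p % 3 = 2 := (pow2_mod3 k).2
    have hmod' : 2 ^ (p + 1) % 3 = 1 := by
      have : 2 * (k + 1) = p + 1 := by omega
      rw [← this]; exact (pow2_mod3 (k + 1)).1
    have hstep1 : ∀ l l' : ℕ, (∀ i < 2 ^ p, ((2 ^ p + i) % 3 = l ↔ i % 3 = l')) →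
        S 3 l (2 ^ (p + 1)) = S 3 l (2 ^ p) - S 3 l' (2 ^ p) := by
      intro l l' hcc
      have : (2 : ℕ) ^ (p + 1) = 2 ^ p + 2 ^ p := by rw [pow_succ]; ring
      rw [this]
      exact S_split p (2 ^ p) l l' le_rfl hcc
    have ha1 : S 3 0 (2 ^ (p + 1)) = S 3 0 (2 ^ p) - S 3 1 (2 ^ p) :=
      hstep1 0 1 (fun i _ => by omega)
    have hb1 : S 3 1 (2 ^ (p + 1)) = S 3 1 (2 ^ p) - S 3 2 (2 ^ p) :=
      hstep1 1 2 (fun i _ => by omega)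
    have hc1 : S 3 2 (2 ^ (p + 1)) = S 3 2 (2 ^ p) - S 3 0 (2 ^ p) :=
      hstep1 2 0 (fun i _ => by omega)
    have hstep2 : ∀ l l' : ℕ,
        (∀ i < 2 ^ (p + 1), ((2 ^ (p + 1) + i) % 3 = l ↔ i % 3 = l')) →
        S 3 l (2 ^ (p + 2)) = S 3 l (2 ^ (p + 1)) - S 3 l' (2 ^ (p + 1)) := by
      intro l l' hcc
      have : (2 : ℕ) ^ (p + 2) = 2 ^ (p + 1) + 2 ^ (p + 1) := by rw [pow_succ 2 (p+1)]; ring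
      rw [this]
      exact S_split (p + 1) (2 ^ (p + 1)) l l' le_rfl hcc
    have ha2 : S 3 0 (2 ^ (p + 2)) = S 3 0 (2 ^ (p + 1)) - S 3 2 (2 ^ (p + 1)) :=
      hstep2 0 2 (fun i _ => by omega)
    have hb2 : S 3 1 (2 ^ (p + 2)) = S 3 1 (2 ^ (p + 1)) - S 3 0 (2 ^ (p + 1)) :=
      hstep2 1 0 (fun i _ => by omega)
    have hc2 : S 3 2 (2 ^ (p + 2)) = S 3 2 (2 ^ (p + 1)) - S 3 1 (2 ^ (p + 1)) :=
      hstep2 2 1 (fun i _ => by omega)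
    have hexp : 2 * (k + 1) + 1 = p + 2 := by omega
    rw [hexp]
    rw [ha2, hb2, hc2, ha1, hb1, hc1, ha, hb, hc]
    refine ⟨by ring, by ring, by ring⟩

theorem stmt_3 (n m : ℕ) (hm : Odd m) (hn : Even n) (h1 : 1 ≤ m) (h2 : m ≤ n - 1) :
    Sint 3 0 (2 ^ n) (2 ^ n + 2 ^ m) = 0 := by
  obtain ⟨k, hk⟩ := hm
  have hn2 : n ≥ 2 := by
    rcases hn with ⟨j, hj⟩; omega
  have hmn : m ≤ n := by omega
  have hxle : 2 ^ m ≤ 2 ^ n := Nat.pow_le_pow_right (by norm_num) hmn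
  obtain ⟨j, hj⟩ := hn
  have hnmod : 2 ^ n % 3 = 1 := by
    have : n = 2 * j := by omega
    rw [this]; exact (pow2_mod3 j).1
  have hsplit : S 3 0 (2 ^ n + 2 ^ m) = S 3 0 (2 ^ n) - S 3 2 (2 ^ m) :=
    S_split n (2 ^ m) 0 2 hxle (fun i _ => by omega)
  have hz : S 3 2 (2 ^ m) = 0 := by
    have : m = 2 * k + 1 := by omega
    rw [this]; exact (triple k).2.2
  unfold Sint
  rw [hsplit, hz]
  ring
end

section
/- For all nonnegative integers x and y with x < y, one has S_{6,1}([2x, 2y)) = −S_{3,0}([x, y)). -/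
lemma sigma2_two_mul_add_one (k : ℕ) : sigma2 (2 * k + 1) = sigma2 k + 1 := by
  unfold sigma2
  rw [Nat.digits_def' (by norm_num : 1 < 2) (by omega)]
  have h1 : (2 * k + 1) % 2 = 1 := by omega
  have h2 : (2 * k + 1) / 2 = k := by omega
  rw [h1, h2, List.sum_cons]
  ring

lemma S_succ (m l x : ℕ) :
    S m l (x + 1) = S m l x + if x % m = l then (-1 : ℤ) ^ sigma2 x else 0 := by
  unfold S
  rw [Finset.range_add_one, Finset.filter_insert]
  split
  · rw [Finset.sum_insert (by simp)]
    ring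
  · ring

lemma key (x : ℕ) : S 6 1 (2 * x) = - S 3 0 x := by
  induction x with
  | zero => simp [S]
  | succ n ih =>
    have : 2 * (n + 1) = (2 * n + 1) + 1 := by ring
    rw [this, S_succ, S_succ, S_succ, ih]
    have h1 : ¬ ((2 * n) % 6 = 1) := by omega
    have h2 : (2 * n + 1) % 6 = 1 ↔ n % 3 = 0 := by omega
    rw [if_neg h1, add_zero]
    simp only [h2]
    by_cases h : n % 3 = 0
    · simp [h, sigma2_two_mul_add_one, pow_succ]
      ring
    · simp [h]

theorem stmt_7 (x y : ℕ) (hxy : x < y) :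
    Sint 6 1 (2 * x) (2 * y) = -Sint 3 0 x y := by
  unfold Sint
  rw [key, key]
  ring
end
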